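/- arXiv:math/9912127 — 2 statements merged into one kernel-verified Lean document; each statement's English description precedes it below -/
import Mathlib

section
/- Let (R,B,L) satisfy: R expansive d×d real matrix, #B = #L = N, (R^n b)·l ∈ ℤ for all n ∈ ℕ, b ∈ B, l ∈ L, and the matrix H = N^{-1/2}(e^{2πi b·l})_{b∈B, l∈L} is unitary. Let μ be the self-similar measure for (R,B) and ℒ = {Σ_{k=0}^n (R*)^k l_k : n ∈ ℕ, l_k ∈ L} with 0 ∈ L. Then the exponentials {e_λ(x) = e^{2πi λ·x} : λ ∈ ℒ} form an orthonormal family in L²(μ). -/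
open MeasureTheory Matrix Real ENNReal

noncomputable section

variable {d : ℕ}

abbrev E (d : ℕ) := EuclideanSpace ℝ (Fin d)

/-- A real matrix is expansive if all its (complex) eigenvalues have modulus `> 1`. -/
def IsExpansive (R : Matrix (Fin d) (Fin d) ℝ) : Prop :=
  ∀ z ∈ spectrum ℂ (R.map (Complex.ofReal)), 1 < ‖z‖

/-- The exponential `e_λ(x) = e^{2πi λ·x}`. -/
def eexp (lam x : E d) : ℂ := Complex.exp (2 * π * Complex.I * (inner ℝ lam x : ℝ))

/-- `χ_B(t) = N⁻¹ ∑_{b∈B} e^{2πi b·t}`. -/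
def chiB (B : Finset (E d)) (t : E d) : ℂ := (B.card : ℂ)⁻¹ * ∑ b ∈ B, eexp b t

/-- The Fourier transform `μ̂(t) = ∫ e^{-2πi t·x} dμ(x)`. -/
def muHat (μ : Measure (E d)) (t : E d) : ℂ := ∫ x, (starRingEnd ℂ) (eexp t x) ∂μ

/-- `μ` is the self-similar probability measure of the system `(R, B)`:
`μ = N⁻¹ ∑_{b∈B} μ ∘ σ_b⁻¹` with `σ_b(x) = R⁻¹ x + b`. -/
def IsSelfSimilarMeasure (R : Matrix (Fin d) (Fin d) ℝ) (B : Finset (E d))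
    (μ : Measure (E d)) : Prop :=
  IsProbabilityMeasure μ ∧
    μ = (B.card : ℝ≥0∞)⁻¹ •
      ∑ b ∈ B, μ.map (fun (x : E d) => (show E d from WithLp.toLp 2 (R⁻¹.mulVec x)) + b)

/-- The compatibility condition `R^n b · l ∈ ℤ` for all `n ≥ 1`, `b ∈ B`, `l ∈ L`. -/
def Compatible (R : Matrix (Fin d) (Fin d) ℝ) (B L : Finset (E d)) : Prop :=
  ∀ n : ℕ, 1 ≤ n → ∀ b ∈ B, ∀ l ∈ L,
    ∃ m : ℤ, (inner ℝ (show E d from WithLp.toLp 2 ((R ^ n).mulVec b)) l : ℝ) = (m : ℝ)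

/-- The Hadamard condition: `N^{-1/2} (e^{2πi b·l})_{b∈B, l∈L}` is a unitary matrix. -/
def Hadamard (B L : Finset (E d)) : Prop :=
  letI : DecidableEq (E d) := Classical.decEq _
  let H : Matrix B L ℂ :=
    fun b l => ((Real.sqrt B.card : ℝ) : ℂ)⁻¹ * eexp (b : E d) (l : E d)
  B.card = L.card ∧ H * H.conjTranspose = 1 ∧ H.conjTranspose * H = 1

/-- The dual lattice-like set `ℒ = {∑_{k=0}^n (R*)^k l_k : n ∈ ℕ, l_k ∈ L}`. -/
def LSet (R : Matrix (Fin d) (Fin d) ℝ) (L : Finset (E d)) : Set (E d) :=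
  {t | ∃ n : ℕ, ∃ l : ℕ → E d, (∀ k, l k ∈ L) ∧
    t = ∑ k ∈ Finset.range (n + 1), (show E d from WithLp.toLp 2 ((Rᵀ ^ k).mulVec (l k)))}

/-- The Ruelle transfer operator `(Cq)(t) = ∑_{l∈L} |χ_B(t−l)|² q((R*)⁻¹(t−l))`. -/
def ruelle (R : Matrix (Fin d) (Fin d) ℝ) (B L : Finset (E d))
    (q : E d → ℝ) (t : E d) : ℝ :=
  ∑ l ∈ L, ‖chiB B (t - l)‖ ^ 2 *
    q (show E d from WithLp.toLp 2 ((Rᵀ)⁻¹.mulVec (t - l)))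

/-- `Q(t) = ∑_{λ∈ℒ} |μ̂(t−λ)|²`. -/
def Qfun (R : Matrix (Fin d) (Fin d) ℝ) (L : Finset (E d))
    (μ : Measure (E d)) (t : E d) : ℝ :=
  ∑' lam : LSet R L, ‖muHat μ (t - lam)‖ ^ 2

/-- The attractor `X_ρ = {∑_{k=0}^∞ −(R*)^{-k} l_k : l_k ∈ L}`. -/
def attractorRho (R : Matrix (Fin d) (Fin d) ℝ) (L : Finset (E d)) : Set (E d) :=
  {x | ∃ l : ℕ → E d, (∀ k, l k ∈ L) ∧
    HasSum (fun k => -(show E d from WithLp.toLp 2 (((Rᵀ)⁻¹ ^ k).mulVec (l k)))) x}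

/-- The Lipschitz-type norm `‖q‖_{Y,∞} = sup_{y∈Y} |∇q(y)|₂`. -/
def YNorm (Y : Set (E d)) (q : E d → ℝ) : ℝ :=
  sSup ((fun y => ‖gradient q y‖) '' Y)


lemma eexp_comm (a x : E d) : eexp a x = eexp x a := by
  rw [eexp, eexp, real_inner_comm]

lemma eexp_add_right (a x y : E d) : eexp a (x + y) = eexp a x * eexp a y := by
  rw [eexp, eexp, eexp, ← Complex.exp_add, inner_add_right]
  congr 1
  push_cast
  ring

lemma conj_eexp (a x : E d) : (starRingEnd ℂ) (eexp a x) = eexp a (-x) := by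
  rw [eexp, eexp, ← Complex.exp_conj, inner_neg_right]
  congr 1
  rw [show ((2:ℂ) * ↑π * Complex.I * ((inner ℝ a x : ℝ):ℂ)) = (((2*π*(inner ℝ a x : ℝ):ℝ)):ℂ) * Complex.I by push_cast; ring]
  rw [_root_.map_mul, Complex.conj_ofReal, Complex.conj_I]
  push_cast
  ring

lemma eexp_int (a x : E d) (h : ∃ m : ℤ, (inner ℝ a x : ℝ) = (m : ℝ)) : eexp a x = 1 := by
  obtain ⟨m, hm⟩ := h
  rw [eexp, hm, show ((2:ℂ) * π * Complex.I * ((m:ℝ):ℂ)) = (m : ℂ) * (2 * π * Complex.I) by push_cast; ring]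
  exact Complex.exp_int_mul_two_pi_mul_I m

lemma norm_eexp (a x : E d) : ‖eexp a x‖ = 1 := by
  rw [eexp, show ((2:ℂ) * π * Complex.I * ((inner ℝ a x : ℝ):ℂ))
      = ((2 * π * (inner ℝ a x : ℝ) : ℝ) : ℂ) * Complex.I by push_cast; ring]
  exact Complex.norm_exp_ofReal_mul_I _

lemma inner_mulVec_left (A : Matrix (Fin d) (Fin d) ℝ) (x y : E d) :
    (inner ℝ (show E d from WithLp.toLp 2 (A.mulVec x)) y : ℝ) = (inner ℝ x (show E d from WithLp.toLp 2 (Aᵀ.mulVec y)) : ℝ) := by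
  simp only [PiLp.inner_apply, RCLike.inner_apply, starRingEnd_apply, star_trivial,
    Matrix.mulVec, dotProduct, Matrix.transpose_apply, Finset.sum_mul, Finset.mul_sum]
  rw [Finset.sum_comm]
  apply Finset.sum_congr rfl; intro i _
  apply Finset.sum_congr rfl; intro j _
  ring

lemma inner_mulVec_right (A : Matrix (Fin d) (Fin d) ℝ) (x y : E d) :
    (inner ℝ x (show E d from WithLp.toLp 2 (A.mulVec y)) : ℝ) = (inner ℝ (show E d from WithLp.toLp 2 (Aᵀ.mulVec x)) y : ℝ) := by
  rw [inner_mulVec_left, Matrix.transpose_transpose]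

lemma eexp_mulVec (A : Matrix (Fin d) (Fin d) ℝ) (t x : E d) :
    eexp t (show E d from WithLp.toLp 2 (A.mulVec x)) = eexp (show E d from WithLp.toLp 2 (Aᵀ.mulVec t)) x := by
  rw [eexp, eexp, inner_mulVec_right]

lemma continuous_mulVec (A : Matrix (Fin d) (Fin d) ℝ) :
    Continuous fun x : E d => (show E d from WithLp.toLp 2 (A.mulVec x)) := by
  have h : (fun x : E d => (show E d from WithLp.toLp 2 (A.mulVec x))) = ⇑(Matrix.toEuclideanLin A) := by
    funext x
    exact (Matrix.toEuclideanLin_apply A x).symm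
  rw [h]
  exact LinearMap.continuous_of_finiteDimensional _

lemma continuous_eexp (t : E d) : Continuous fun x : E d => eexp t x := by
  unfold eexp
  exact Complex.continuous_exp.comp
    (continuous_const.mul (Complex.continuous_ofReal.comp (continuous_const.inner continuous_id)))


lemma card_pos_of_selfSimilar {R : Matrix (Fin d) (Fin d) ℝ} {B : Finset (E d)}
    {μ : Measure (E d)} (hμ : IsSelfSimilarMeasure R B μ) : 0 < B.card := by
  rcases Nat.eq_zero_or_pos B.card with h | h
  · exfalso
    have hB : B = ∅ := Finset.card_eq_zero.mp h
    have h2 := hμ.2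
    rw [hB] at h2
    simp only [Finset.sum_empty, smul_zero] at h2
    have := hμ.1.measure_univ
    rw [h2] at this
    simp at this
  · exact h

lemma integrable_conj_eexp {μ : Measure (E d)} [IsFiniteMeasure μ] (t : E d) :
    Integrable (fun x => (starRingEnd ℂ) (eexp t x)) μ := by
  refine (integrable_const (1:ℝ)).mono'
    ((Complex.continuous_conj.comp (continuous_eexp t)).aestronglyMeasurable) ?_
  refine Filter.Eventually.of_forall fun x => ?_
  rw [starRingEnd_apply, norm_star, norm_eexp]

lemma muHat_step {R : Matrix (Fin d) (Fin d) ℝ} {B : Finset (E d)} {μ : Measure (E d)}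
    (hμ : IsSelfSimilarMeasure R B μ) (t : E d) :
    muHat μ t = (starRingEnd ℂ) (chiB B t) *
      muHat μ (show E d from WithLp.toLp 2 ((Rᵀ)⁻¹.mulVec t)) := by
  haveI := hμ.1
  have hcard := card_pos_of_selfSimilar hμ
  set σ : E d → E d → E d := fun b x => (show E d from WithLp.toLp 2 (R⁻¹.mulVec x)) + b with hσdef
  have hσ : ∀ b, Continuous (σ b) := fun b => (continuous_mulVec _).add continuous_const
  haveI : ∀ b, IsProbabilityMeasure (μ.map (σ b)) :=
    fun b => Measure.isProbabilityMeasure_map (hσ b).measurable.aemeasurable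
  have hmeas : ∀ ν : Measure (E d), AEStronglyMeasurable (fun x => (starRingEnd ℂ) (eexp t x)) ν :=
    fun ν => (Complex.continuous_conj.comp (continuous_eexp t)).aestronglyMeasurable
  calc muHat μ t
      = ∫ x, (starRingEnd ℂ) (eexp t x)
          ∂((B.card : ℝ≥0∞)⁻¹ • ∑ b ∈ B, μ.map (σ b)) := by
        rw [muHat]; conv_lhs => rw [hμ.2]
    _ = ((B.card : ℝ≥0∞)⁻¹).toReal • ∑ b ∈ B, ∫ x, (starRingEnd ℂ) (eexp t x) ∂(μ.map (σ b)) := by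
        rw [integral_smul_measure, integral_finset_sum_measure]
        intro b _
        exact integrable_conj_eexp t
    _ = ((B.card : ℝ)⁻¹) • ∑ b ∈ B, (starRingEnd ℂ) (eexp t b) *
          muHat μ (show E d from WithLp.toLp 2 ((Rᵀ)⁻¹.mulVec t)) := by
        have hsc : ((B.card : ℝ≥0∞)⁻¹).toReal = (B.card : ℝ)⁻¹ := by
          simp [ENNReal.toReal_inv]
        rw [hsc]
        congr 1
        apply Finset.sum_congr rfl
        intro b _
        rw [integral_map (hσ b).measurable.aemeasurable (hmeas _)]
        have hpt : ∀ x, (starRingEnd ℂ) (eexp t (σ b x))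
            = (starRingEnd ℂ) (eexp t b) *
              (starRingEnd ℂ) (eexp (show E d from WithLp.toLp 2 ((Rᵀ)⁻¹.mulVec t)) x) := by
          intro x
          rw [hσdef]
          simp only
          rw [eexp_add_right, eexp_mulVec, Matrix.transpose_nonsing_inv, _root_.map_mul]
          ring
        simp_rw [hpt]
        rw [integral_const_mul, muHat]
    _ = (starRingEnd ℂ) (chiB B t) * muHat μ (show E d from WithLp.toLp 2 ((Rᵀ)⁻¹.mulVec t)) := by
        rw [chiB, _root_.map_mul, map_inv₀, map_natCast, map_sum, mul_assoc, Finset.sum_mul,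
          Complex.real_smul, Complex.ofReal_inv, Complex.ofReal_natCast]
        congr 1
        apply Finset.sum_congr rfl
        intro b _
        rw [eexp_comm]


lemma muHat_vanish {R : Matrix (Fin d) (Fin d) ℝ} {B : Finset (E d)} {μ : Measure (E d)}
    (hμ : IsSelfSimilarMeasure R B μ) (m : ℕ) (t : E d)
    (h : chiB B (show E d from WithLp.toLp 2 (((Rᵀ)⁻¹ ^ m).mulVec t)) = 0) : muHat μ t = 0 := by
  induction m generalizing t with
  | zero =>
      rw [pow_zero, Matrix.one_mulVec] at h
      rw [muHat_step hμ t, h, map_zero, zero_mul]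
  | succ m ih =>
      rw [muHat_step hμ t]
      have : muHat μ (show E d from WithLp.toLp 2 ((Rᵀ)⁻¹.mulVec t)) = 0 := by
        apply ih
        rw [Matrix.mulVec_mulVec, ← pow_succ]
        exact h
      rw [this, mul_zero]

lemma isUnit_det_of_expansive {R : Matrix (Fin d) (Fin d) ℝ} (hR : IsExpansive R) :
    IsUnit R.det := by
  rw [isUnit_iff_ne_zero]
  intro hdet
  have h0 : (0 : ℂ) ∈ spectrum ℂ (R.map Complex.ofReal) := by
    rw [spectrum.mem_iff]
    simp only [map_zero, zero_sub, IsUnit.neg_iff]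
    rw [Matrix.isUnit_iff_isUnit_det]
    have : (R.map Complex.ofReal).det = ((R.det : ℝ) : ℂ) := by
      rw [show R.map Complex.ofReal = Complex.ofRealHom.mapMatrix R from rfl,
        ← RingHom.map_det]
      rfl
    rw [this, hdet]
    simp
  have := hR 0 h0
  rw [norm_zero] at this
  linarith

lemma sum_eexp_vanish {B L : Finset (E d)} (hHad : Hadamard B L) (hB : 0 < B.card)
    {l l' : E d} (hl : l ∈ L) (hl' : l' ∈ L) (hne : l ≠ l') :
    ∑ b ∈ B, eexp b (l' - l) = 0 := by
  letI : DecidableEq (E d) := Classical.decEq _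
  obtain ⟨hc, h1, h2⟩ := hHad
  have hentry := congrFun (congrFun h2 ⟨l, hl⟩) ⟨l', hl'⟩
  erw [Matrix.mul_apply, Matrix.one_apply_ne (by simp [hne])] at hentry
  have hterm : ∀ b : {x // x ∈ B},
      (Matrix.conjTranspose (fun (b : {x // x ∈ B}) (l : {x // x ∈ L}) =>
        ((Real.sqrt B.card : ℝ) : ℂ)⁻¹ * eexp (b : E d) (l : E d))) ⟨l, hl⟩ b *
        (((Real.sqrt B.card : ℝ) : ℂ)⁻¹ * eexp (b : E d) l') =
      (((Real.sqrt B.card : ℝ) : ℂ)⁻¹)^2 * eexp (b : E d) (l' - l) := by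
    intro b
    show star (((Real.sqrt B.card : ℝ) : ℂ)⁻¹ * eexp (b : E d) l) * _ = _
    simp only [star_mul']
    rw [show star (((Real.sqrt B.card : ℝ) : ℂ)⁻¹) = ((Real.sqrt B.card : ℝ) : ℂ)⁻¹ by
      rw [← starRingEnd_apply, map_inv₀, Complex.conj_ofReal]]
    rw [← starRingEnd_apply, conj_eexp, show l' - l = -l + l' by abel, eexp_add_right]
    ring
  rw [Finset.sum_congr rfl (fun b _ => hterm b)] at hentry
  rw [← Finset.sum_coe_sort B (fun b => eexp b (l' - l))]
  have hsq : ((((Real.sqrt B.card : ℝ) : ℂ))⁻¹)^2 ≠ 0 := by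
    apply pow_ne_zero
    apply inv_ne_zero
    exact_mod_cast (Real.sqrt_pos.mpr (by exact_mod_cast hB)).ne'
  rw [← Finset.mul_sum] at hentry
  exact (mul_eq_zero.mp hentry).resolve_left hsq

lemma chiB_vanish {B L : Finset (E d)} (hHad : Hadamard B L) (hB : 0 < B.card)
    {l l' : E d} (hl : l ∈ L) (hl' : l' ∈ L) (hne : l ≠ l') (s : E d)
    (hs : ∀ b ∈ B, ∃ m : ℤ, (inner ℝ b s : ℝ) = (m : ℝ)) :
    chiB B ((l' - l) + s) = 0 := by
  rw [chiB]
  have h1 : ∀ b ∈ B, eexp b ((l' - l) + s) = eexp b (l' - l) := fun b hb => by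
    rw [eexp_add_right, eexp_int _ _ (hs b hb), mul_one]
  rw [Finset.sum_congr rfl h1, sum_eexp_vanish hHad hB hl hl' hne, mul_zero]

lemma exists_int_sum {s : Finset ℕ} {f : ℕ → ℝ} (h : ∀ k ∈ s, ∃ m : ℤ, f k = (m : ℝ)) :
    ∃ m : ℤ, ∑ k ∈ s, f k = (m : ℝ) := by
  classical
  induction s using Finset.induction with
  | empty => exact ⟨0, by simp⟩
  | insert x t hx ih =>
      obtain ⟨m1, hm1⟩ := h x (Finset.mem_insert_self x t)
      obtain ⟨m2, hm2⟩ := ih fun k hk => h k (Finset.mem_insert_of_mem hk)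
      exact ⟨m1 + m2, by rw [Finset.sum_insert hx, hm1, hm2]; push_cast; ring⟩

lemma mulVec_finsum (A : Matrix (Fin d) (Fin d) ℝ) (s : Finset ℕ) (f : ℕ → E d) :
    (show E d from WithLp.toLp 2 (A.mulVec (WithLp.ofLp (∑ k ∈ s, f k)))) = ∑ k ∈ s, (show E d from WithLp.toLp 2 (A.mulVec (f k))) := by
  classical
  induction s using Finset.induction with
  | empty =>
      simp
  | insert x t hx ih =>
      rw [Finset.sum_insert hx, Finset.sum_insert hx, ← ih]
      rw [WithLp.ofLp_add, Matrix.mulVec_add]; rfl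

/-- For a dual iteration system `(R,B,L)` with compatibility and Hadamard conditions
and `0 ∈ L`, the exponentials `{e_λ : λ ∈ ℒ}` form an orthonormal family in `L²(μ)`. -/
theorem exponentials_orthonormal [DecidableEq (E d)]
    (R : Matrix (Fin d) (Fin d) ℝ) (hR : IsExpansive R)
    (B L : Finset (E d)) (hN : B.card = L.card)
    (hcomp : Compatible R B L) (hHad : Hadamard B L) (h0 : (0 : E d) ∈ L)
    (μ : Measure (E d)) (hμ : IsSelfSimilarMeasure R B μ) :
    ∀ lam ∈ LSet R L, ∀ lam' ∈ LSet R L,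
      ∫ x, (starRingEnd ℂ) (eexp lam x) * eexp lam' x ∂μ
        = if lam = lam' then 1 else 0 := by
  intro lam hlam lam' hlam'
  haveI := hμ.1
  have hB : 0 < B.card := card_pos_of_selfSimilar hμ
  by_cases heq : lam = lam'
  · subst heq
    rw [if_pos rfl]
    have hpt : ∀ x : E d, (starRingEnd ℂ) (eexp lam x) * eexp lam x = 1 := by
      intro x
      rw [conj_eexp, ← eexp_add_right, neg_add_cancel]
      simp [eexp]
    simp_rw [hpt]
    simp [measure_univ]
  · rw [if_neg heq]
    -- rewrite integrand
    have hpt : ∀ x : E d, (starRingEnd ℂ) (eexp lam x) * eexp lam' x = eexp (lam' - lam) x := by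
      intro x
      rw [eexp_comm lam x, conj_eexp, eexp_comm lam' x, ← eexp_add_right, neg_add_eq_sub,
        eexp_comm]
    simp_rw [hpt]
    -- main claim: muHat μ (lam' - lam) = 0
    have hmu0 : muHat μ (lam' - lam) = 0 := by
      obtain ⟨n, la, hla, hlameq⟩ := hlam
      obtain ⟨n', lb, hlb, hlameq'⟩ := hlam'
      set N0 := max n n' with hN0
      set a : ℕ → E d := fun k => if k ≤ n then la k else 0 with ha
      set a' : ℕ → E d := fun k => if k ≤ n' then lb k else 0 with ha'
      have haL : ∀ k, a k ∈ L := fun k => by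
        rw [ha]; dsimp only; split
        · exact hla k
        · exact h0
      have ha'L : ∀ k, a' k ∈ L := fun k => by
        rw [ha']; dsimp only; split
        · exact hlb k
        · exact h0
      have hsum : lam = ∑ k ∈ Finset.range (N0 + 1), (show E d from WithLp.toLp 2 ((Rᵀ ^ k).mulVec (a k))) := by
        rw [hlameq]
        have h1 : ∑ k ∈ Finset.range (n + 1), (show E d from WithLp.toLp 2 ((Rᵀ ^ k).mulVec (la k)))
            = ∑ k ∈ Finset.range (n + 1), (show E d from WithLp.toLp 2 ((Rᵀ ^ k).mulVec (a k))) := by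
          apply Finset.sum_congr rfl
          intro k hk
          rw [ha]; dsimp only
          rw [if_pos (Nat.lt_succ_iff.mp (Finset.mem_range.mp hk))]
        rw [h1]
        apply Finset.sum_subset
        · exact Finset.range_subset_range.mpr (by omega)
        · intro k hk hknot
          have hkn : ¬ k ≤ n := by
            simp only [Finset.mem_range] at hk hknot; omega
          rw [ha]; dsimp only; rw [if_neg hkn]
          simp
      have hsum' : lam' = ∑ k ∈ Finset.range (N0 + 1), (show E d from WithLp.toLp 2 ((Rᵀ ^ k).mulVec (a' k))) := by
        rw [hlameq']
        have h1 : ∑ k ∈ Finset.range (n' + 1), (show E d from WithLp.toLp 2 ((Rᵀ ^ k).mulVec (lb k)))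
            = ∑ k ∈ Finset.range (n' + 1), (show E d from WithLp.toLp 2 ((Rᵀ ^ k).mulVec (a' k))) := by
          apply Finset.sum_congr rfl
          intro k hk
          rw [ha']; dsimp only
          rw [if_pos (Nat.lt_succ_iff.mp (Finset.mem_range.mp hk))]
        rw [h1]
        apply Finset.sum_subset
        · exact Finset.range_subset_range.mpr (by omega)
        · intro k hk hknot
          have hkn : ¬ k ≤ n' := by
            simp only [Finset.mem_range] at hk hknot; omega
          rw [ha']; dsimp only; rw [if_neg hkn]
          simp
      have hex : ∃ k, a k ≠ a' k := by
        by_contra hno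
        push_neg at hno
        exact heq (by rw [hsum, hsum']; exact Finset.sum_congr rfl fun k _ => by rw [hno k])
      set k₀ := Nat.find hex with hk₀def
      have hk₀ : a k₀ ≠ a' k₀ := Nat.find_spec hex
      have hmin : ∀ j, j < k₀ → a j = a' j := fun j hj => by
        have := Nat.find_min hex hj
        push_neg at this
        exact this
      have hk₀N : k₀ ≤ N0 := by
        by_contra hgt
        push_neg at hgt
        apply hk₀
        rw [ha, ha']; dsimp only
        rw [if_neg (by omega), if_neg (by omega)]
      -- difference as a sum over Ico
      have ht : lam' - lam = ∑ k ∈ Finset.Ico k₀ (N0 + 1),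
          (show E d from WithLp.toLp 2 ((Rᵀ ^ k).mulVec (a' k - a k))) := by
        rw [hsum, hsum', ← Finset.sum_sub_distrib]
        have hterm : ∀ k, (show E d from WithLp.toLp 2 ((Rᵀ ^ k).mulVec (a' k)))
            - (show E d from WithLp.toLp 2 ((Rᵀ ^ k).mulVec (a k)))
            = (show E d from WithLp.toLp 2 ((Rᵀ ^ k).mulVec (a' k - a k))) := by
          intro k
          rw [Matrix.mulVec_sub]; rfl
        simp_rw [hterm]
        symm
        apply Finset.sum_subset
        · intro k hk
          simp only [Finset.mem_Ico] at hk
          exact Finset.mem_range.mpr (by omega)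
        · intro k hk hknot
          have hklt : k < k₀ := by
            simp only [Finset.mem_range] at hk
            simp only [Finset.mem_Ico] at hknot
            omega
          rw [hmin k hklt, sub_self]
          simp
      -- the chiB factor vanishes
      have hchi : chiB B (show E d from WithLp.toLp 2 (((Rᵀ)⁻¹ ^ k₀).mulVec (lam' - lam))) = 0 := by
        have hdet : IsUnit Rᵀ.det := by
          rw [Matrix.det_transpose]; exact isUnit_det_of_expansive hR
        have hmv : (show E d from WithLp.toLp 2 (((Rᵀ)⁻¹ ^ k₀).mulVec (lam' - lam)))
            = (a' k₀ - a k₀) + ∑ k ∈ Finset.Ico (k₀ + 1) (N0 + 1),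
                (show E d from WithLp.toLp 2 ((Rᵀ ^ (k - k₀)).mulVec (a' k - a k))) := by
          rw [show lam'.ofLp - lam.ofLp = (lam' - lam).ofLp from rfl, ht, mulVec_finsum]
          have hterm2 : ∀ k ∈ Finset.Ico k₀ (N0 + 1),
              (show E d from WithLp.toLp 2 (((Rᵀ)⁻¹ ^ k₀).mulVec
                ((show E d from WithLp.toLp 2 ((Rᵀ ^ k).mulVec (a' k - a k))))))
              = (show E d from WithLp.toLp 2 ((Rᵀ ^ (k - k₀)).mulVec (a' k - a k))) := by
            intro k hk
            have hkk : k₀ ≤ k := (Finset.mem_Ico.mp hk).1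
            show WithLp.toLp 2 (((Rᵀ)⁻¹ ^ k₀).mulVec ((Rᵀ ^ k).mulVec (WithLp.ofLp (a' k - a k)))) = _
            rw [Matrix.mulVec_mulVec]
            have hXY : (Rᵀ)⁻¹ ^ k₀ * Rᵀ ^ k = Rᵀ ^ (k - k₀) := by
              rw [Matrix.inv_pow', show Rᵀ ^ k = Rᵀ ^ k₀ * Rᵀ ^ (k - k₀) by
                rw [← pow_add]; congr 1; omega]
              exact Matrix.nonsing_inv_mul_cancel_left (Rᵀ ^ k₀) (Rᵀ ^ (k - k₀))
                (by rw [Matrix.det_pow]; exact hdet.pow k₀)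
            rw [hXY]
            rfl
          rw [Finset.sum_congr rfl hterm2,
            Finset.sum_eq_sum_Ico_succ_bot (by omega : k₀ < N0 + 1)]
          congr 1
          rw [Nat.sub_self, pow_zero]
          rw [Matrix.one_mulVec]; rfl
        rw [hmv]
        apply chiB_vanish hHad hB (haL k₀) (ha'L k₀) hk₀
        intro b hb
        rw [inner_sum]
        apply exists_int_sum
        intro k hk
        have hk1 : 1 ≤ k - k₀ := by
          simp only [Finset.mem_Ico] at hk; omega
        obtain ⟨m1, hm1⟩ := hcomp (k - k₀) hk1 b hb (a' k) (ha'L k)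
        obtain ⟨m2, hm2⟩ := hcomp (k - k₀) hk1 b hb (a k) (haL k)
        refine ⟨m1 - m2, ?_⟩
        rw [inner_mulVec_right, show ((Rᵀ ^ (k - k₀))ᵀ) = R ^ (k - k₀) by
          rw [← Matrix.transpose_pow, Matrix.transpose_transpose]]
        rw [show WithLp.toLp 2 ((a' k).ofLp - (a k).ofLp) = a' k - a k from rfl, inner_sub_right, hm1, hm2]
        push_cast
        ring
      exact muHat_vanish hμ k₀ (lam' - lam) hchi
    have hconj : ∫ x, eexp (lam' - lam) x ∂μ = (starRingEnd ℂ) (muHat μ (lam' - lam)) := by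
      rw [muHat, integral_conj, Complex.conj_conj]
    rw [hconj, hmu0, map_zero]

end
end

section
/- Let μ₀ be the probability measure on ℝ satisfying μ₀ = (1/2)(μ₀∘σ_0^{-1} + μ₀∘σ_{1/2}^{-1}) with σ_b(x) = x/4 + b, let L = {0,1}, ℒ = {Σ_{k=0}^n 4^k l_k : l_k ∈ {0,1}}, and Ω = [0,1] + ℒ. Define μ(Δ) = m(Δ ∩ Ω) (m Lebesgue measure) and ν(Δ) = Σ_{k=0}^∞ μ₀(Δ + k). Then Ω tiles ℝ with tiling set −2ℒ: the translates {Ω + t : t ∈ −2ℒ} partition ℝ up to Lebesgue-null sets. -/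
open MeasureTheory

noncomputable section

/-- `ℒ = {∑_{k=0}^n 4^k l_k : n ∈ ℕ, l_k ∈ {0,1}}`, the set of (real) nonnegative
integers whose base-4 expansion uses only the digits 0 and 1. -/
def Lset : Set ℝ :=
  {t | ∃ n : ℕ, ∃ l : ℕ → ℕ, (∀ k, l k ≤ 1) ∧
    t = ∑ k ∈ Finset.range (n + 1), (4 : ℝ) ^ k * (l k : ℝ)}

/-- `Ω = [0,1] + ℒ`. -/
def Omega : Set ℝ := {x | ∃ y ∈ Set.Icc (0 : ℝ) 1, ∃ lam ∈ Lset, x = y + lam}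

/-- Natural-number version of `Lset`. -/
def Lnat : Set ℕ :=
  {n | ∃ m : ℕ, ∃ l : ℕ → ℕ, (∀ k, l k ≤ 1) ∧
    n = ∑ k ∈ Finset.range (m + 1), 4 ^ k * l k}

lemma Lnat_zero : (0 : ℕ) ∈ Lnat :=
  ⟨0, fun _ => 0, fun _ => Nat.zero_le 1, by simp⟩

lemma Lnat_cons {a r : ℕ} (ha : a ∈ Lnat) (hr : r ≤ 1) : 4 * a + r ∈ Lnat := by
  obtain ⟨m, l, hl, rfl⟩ := ha
  refine ⟨m + 1, fun k => if k = 0 then r else l (k - 1), ?_, ?_⟩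
  · rintro (_ | k)
    · simpa using hr
    · simpa using hl k
  · conv_rhs => rw [Finset.sum_range_succ']
    simp only [Nat.succ_ne_zero, if_false, Nat.add_sub_cancel, if_pos rfl, pow_zero, one_mul]
    have h1 : ∑ k ∈ Finset.range (m + 1), (4 : ℕ) ^ (k + 1) * l k
        = 4 * ∑ k ∈ Finset.range (m + 1), 4 ^ k * l k := by
      rw [Finset.mul_sum]
      exact Finset.sum_congr rfl fun k _ => by ring
    rw [h1]
    simp

lemma Lnat_destruct {n : ℕ} (hn : n ∈ Lnat) : n % 4 ≤ 1 ∧ n / 4 ∈ Lnat := by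
  obtain ⟨m, l, hl, rfl⟩ := hn
  have hsum : ∑ k ∈ Finset.range (m + 1), 4 ^ k * l k
      = 4 * (∑ k ∈ Finset.range m, 4 ^ k * l (k + 1)) + l 0 := by
    rw [Finset.sum_range_succ']
    simp [Finset.mul_sum, pow_succ, mul_comm, mul_assoc, mul_left_comm]
  have hS : (∑ k ∈ Finset.range m, 4 ^ k * l (k + 1)) ∈ Lnat := by
    cases m with
    | zero => simpa using Lnat_zero
    | succ m' => exact ⟨m', fun k => l (k + 1), fun k => hl _, rfl⟩
  have h0 := hl 0
  constructor
  · omega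
  · have : (∑ k ∈ Finset.range (m + 1), 4 ^ k * l k) / 4
        = ∑ k ∈ Finset.range m, 4 ^ k * l (k + 1) := by omega
    rw [this]; exact hS

/-- Injectivity: the map `(a,b) ↦ a + 2b` is injective on `Lnat × Lnat`. -/
lemma Lnat_inj : ∀ N a b c d : ℕ, a ∈ Lnat → b ∈ Lnat → c ∈ Lnat → d ∈ Lnat →
    a + 2 * b = N → c + 2 * d = N → a = c ∧ b = d := by
  intro N
  induction N using Nat.strong_induction_on with
  | _ N ih =>
    intro a b c d ha hb hc hd hab hcd
    obtain ⟨ha4, ha'⟩ := Lnat_destruct ha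
    obtain ⟨hb4, hb'⟩ := Lnat_destruct hb
    obtain ⟨hc4, hc'⟩ := Lnat_destruct hc
    obtain ⟨hd4, hd'⟩ := Lnat_destruct hd
    by_cases h0 : N = 0
    · omega
    · have hlt : a / 4 + 2 * (b / 4) < N := by omega
      have := ih _ hlt (a / 4) (b / 4) (c / 4) (d / 4) ha' hb' hc' hd' rfl (by omega)
      omega

/-- Existence: every integer is `a - 2b` with `a, b ∈ Lnat`. -/
lemma int_rep : ∀ N : ℕ, ∀ n : ℤ, n.natAbs = N →
    ∃ a b : ℕ, a ∈ Lnat ∧ b ∈ Lnat ∧ n = (a : ℤ) - 2 * b := by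
  intro N
  induction N using Nat.strong_induction_on with
  | _ N ih =>
    intro n hN
    by_cases h0 : n = 0
    · exact ⟨0, 0, Lnat_zero, Lnat_zero, by simp [h0]⟩
    · set n' : ℤ := if n % 4 ≤ 1 then n / 4 else n / 4 + 1 with hn'
      have hkey : (n % 4 ≤ 1 ∧ n = 4 * n' + n % 4) ∨
          (¬ n % 4 ≤ 1 ∧ n = 4 * n' + (n % 4 - 4)) := by
        by_cases h : n % 4 ≤ 1 <;> simp [hn', h] <;> omega
      have hlt : n'.natAbs < N := by
        subst hN
        rcases hkey with ⟨h1, h2⟩ | ⟨h1, h2⟩ <;> omega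
      obtain ⟨a', b', ha', hb', hrep⟩ := ih _ hlt n' rfl
      rcases hkey with ⟨h1, h2⟩ | ⟨h1, h2⟩
      · -- digit d = n % 4 ∈ {0, 1}
        refine ⟨4 * a' + (n % 4).toNat, 4 * b', Lnat_cons ha' (by omega),
          by simpa using Lnat_cons hb' (le_refl 0 |>.trans zero_le_one), ?_⟩
        push_cast
        omega
      · -- digit d = n % 4 - 4 ∈ {-2, -1}
        have h4 : n % 4 = 2 ∨ n % 4 = 3 := by omega
        rcases h4 with h4 | h4
        · -- d = -2 : a = 4a', b = 4b' + 1
          refine ⟨4 * a', 4 * b' + 1,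
            by simpa using Lnat_cons ha' (zero_le_one), Lnat_cons hb' le_rfl, ?_⟩
          push_cast
          omega
        · -- d = -1 : a = 4a' + 1, b = 4b' + 1
          refine ⟨4 * a' + 1, 4 * b' + 1, Lnat_cons ha' le_rfl, Lnat_cons hb' le_rfl, ?_⟩
          push_cast
          omega

lemma mem_Lset_iff {t : ℝ} : t ∈ Lset ↔ ∃ n : ℕ, n ∈ Lnat ∧ t = (n : ℝ) := by
  constructor
  · rintro ⟨m, l, hl, rfl⟩
    refine ⟨∑ k ∈ Finset.range (m + 1), 4 ^ k * l k, ⟨m, l, hl, rfl⟩, ?_⟩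
    push_cast
    rfl
  · rintro ⟨n, ⟨m, l, hl, rfl⟩, rfl⟩
    refine ⟨m, l, hl, ?_⟩
    push_cast
    rfl

/-- The set `Ω = [0,1] + ℒ` tiles `ℝ` with tiling set `−2ℒ`: for Lebesgue-a.e.
`x ∈ ℝ` there is a unique `t ∈ −2ℒ` with `x − t ∈ Ω`. -/
theorem omega_tiles_with_minus_two_L :
    ∀ᵐ x : ℝ, ∃! t : ℝ, (∃ lam ∈ Lset, t = -2 * lam) ∧ x - t ∈ Omega := by
  have hz : volume (Set.range ((↑) : ℤ → ℝ)) = 0 :=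
    (Set.countable_range _).measure_zero _
  rw [← compl_mem_ae_iff] at hz
  filter_upwards [hz] with x hx
  -- x is not an integer
  have hxint : ∀ m : ℤ, x ≠ (m : ℝ) := by
    intro m hm
    exact hx ⟨m, hm.symm⟩
  obtain ⟨a, b, ha, hb, hab⟩ := int_rep (⌊x⌋).natAbs ⌊x⌋ rfl
  have hfr0 : 0 < Int.fract x := by
    rcases lt_or_eq_of_le (Int.fract_nonneg x) with h | h
    · exact h
    · exact absurd (by rw [← Int.self_sub_fract x, ← h, sub_zero]) (hxint ⌊x⌋)
  have hfr1 : Int.fract x < 1 := Int.fract_lt_one x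
  have hxeq : x = Int.fract x + (⌊x⌋ : ℝ) := by rw [add_comm, Int.floor_add_fract]
  refine ⟨-2 * (b : ℝ), ⟨⟨(b : ℝ), mem_Lset_iff.mpr ⟨b, hb, rfl⟩, rfl⟩, ?_⟩, ?_⟩
  · refine ⟨Int.fract x, ⟨le_of_lt hfr0, le_of_lt hfr1⟩,
      (a : ℝ), mem_Lset_iff.mpr ⟨a, ha, rfl⟩, ?_⟩
    have h2 : ((⌊x⌋ : ℤ) : ℝ) = (a : ℝ) - 2 * b := by
      exact_mod_cast congrArg (Int.cast : ℤ → ℝ) hab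
    linarith [Int.floor_add_fract x, h2]
  · rintro t' ⟨⟨lam, hlam, rfl⟩, y', hy', lam2, hlam2, hx'⟩
    obtain ⟨b', hb', rfl⟩ := mem_Lset_iff.mp hlam
    obtain ⟨a', ha', rfl⟩ := mem_Lset_iff.mp hlam2
    -- x = y' + (a' - 2b')
    have hxe : x = y' + ((a' : ℤ) - 2 * b' : ℤ) := by
      push_cast
      linarith [hx']
    have hy0 : y' ≠ 0 := by
      intro h; subst h
      exact hxint _ (by rw [hxe]; ring)
    have hy1 : y' ≠ 1 := by
      intro h; subst h
      refine hxint ((a' : ℤ) - 2 * b' + 1) ?_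
      rw [hxe]; push_cast; ring
    have hy01 : 0 < y' ∧ y' < 1 :=
      ⟨lt_of_le_of_ne hy'.1 (Ne.symm hy0), lt_of_le_of_ne hy'.2 hy1⟩
    have hfl : ⌊x⌋ = (a' : ℤ) - 2 * b' := by
      rw [Int.floor_eq_iff]
      constructor
      · rw [hxe]; push_cast; linarith [hy01.1]
      · rw [hxe]; push_cast; linarith [hy01.2]
    have heq : (a : ℤ) - 2 * b = (a' : ℤ) - 2 * b' := by rw [← hab, hfl]
    have hnat : a + 2 * b' = a' + 2 * b := by omega
    have := Lnat_inj (a + 2 * b') a b' a' b ha hb' ha' hb rfl hnat.symm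
    rw [this.2]
end
end
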